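/- Let P(t) = t^d + a_{d-1} t^{d-1} + ⋯ + a_1 t be a monic real polynomial of degree d > 1 with no constant term and with all a_r ≠ 0, and let Γ₀ = 2^{100·d!}. For 1 ≤ r ≤ d define 𝒥_r = { k ∈ ℤ : |a_r 2^{kr}| > Γ₀ |a_{r'} 2^{k r'}| for every r' ≠ r }. Then the complement ℤ ∖ ⋃_{1 ≤ r ≤ d} 𝒥_r has cardinality at most 4 d² Γ₀. -/

import Mathlib

/-- Li–Xiao lemma: at all but boundedly many dyadic scales, one monomial of the
polynomial `t^d + a_{d-1} t^{d-1} + ⋯ + a_1 t` dominates all others by the factor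
`Γ₀ = 2^(100·d!)`. -/
theorem stmt3 (d : ℕ) (hd : 1 < d) (a : ℕ → ℝ) (had : a d = 1)
    (hne : ∀ r, 1 ≤ r → r ≤ d → a r ≠ 0) :
    {k : ℤ | ¬ ∃ r, 1 ≤ r ∧ r ≤ d ∧ ∀ r', 1 ≤ r' → r' ≤ d → r' ≠ r →
        ((2 : ℝ) ^ (100 * Nat.factorial d)) * |a r' * (2 : ℝ) ^ (k * r')|
          < |a r * (2 : ℝ) ^ (k * r)|}.Finite ∧
    {k : ℤ | ¬ ∃ r, 1 ≤ r ∧ r ≤ d ∧ ∀ r', 1 ≤ r' → r' ≤ d → r' ≠ r →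
        ((2 : ℝ) ^ (100 * Nat.factorial d)) * |a r' * (2 : ℝ) ^ (k * r')|
          < |a r * (2 : ℝ) ^ (k * r)|}.ncard ≤ 4 * d ^ 2 * 2 ^ (100 * Nat.factorial d) := by
  classical
  set N : ℕ := 100 * Nat.factorial d with hN
  have hN1 : 1 ≤ N := by
    have := Nat.factorial_pos d
    omega
  set Γ : ℝ := (2 : ℝ) ^ N with hΓ
  have hΓ1 : (1 : ℝ) ≤ Γ := one_le_pow₀ one_le_two
  -- the "two monomials comparable" sets
  set J : ℕ → ℕ → Set ℤ := fun p q => {k : ℤ |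
      |a q * (2 : ℝ) ^ (k * q)| ≤ Γ * |a p * (2 : ℝ) ^ (k * p)| ∧
      |a p * (2 : ℝ) ^ (k * p)| ≤ Γ * |a q * (2 : ℝ) ^ (k * q)|} with hJdef
  -- diameter bound for each J p q
  have hdiam : ∀ p q : ℕ, 1 ≤ p → p < q → q ≤ d → ∀ k₁ k₂ : ℤ,
      k₁ ∈ J p q → k₂ ∈ J p q → k₂ - k₁ ≤ 2 * (N : ℤ) := by
    intro p q hp hpq hq k₁ k₂ h1 h2
    have hap : a p ≠ 0 := hne p hp (le_of_lt (lt_of_lt_of_le hpq hq))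
    have haq : a q ≠ 0 := hne q (by omega) hq
    have hA : 0 < |a p| := abs_pos.mpr hap
    have hB : 0 < |a q| := abs_pos.mpr haq
    have habs : ∀ (r : ℕ) (k : ℤ), |a r * (2 : ℝ) ^ (k * r)| = |a r| * (2:ℝ) ^ (k * r) := by
      intro r k
      rw [abs_mul, abs_of_pos (zpow_pos (two_pos : (0:ℝ) < 2) (k * (r:ℤ)))]
    have h2' : |a q| * (2:ℝ) ^ (k₂ * q) ≤ Γ * (|a p| * (2:ℝ) ^ (k₂ * p)) := by
      have := h2.1; rwa [habs, habs] at this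
    have h1' : |a p| * (2:ℝ) ^ (k₁ * p) ≤ Γ * (|a q| * (2:ℝ) ^ (k₁ * q)) := by
      have := h1.2; rwa [habs, habs] at this
    have key := mul_le_mul h2' h1' (by positivity) (by positivity)
    have key2 : (2:ℝ) ^ (k₂ * q + k₁ * p) ≤ Γ ^ 2 * (2:ℝ) ^ (k₂ * p + k₁ * q) := by
      rw [zpow_add₀ (two_ne_zero), zpow_add₀ (two_ne_zero)]
      calc (2:ℝ) ^ (k₂ * q) * (2:ℝ) ^ (k₁ * p)
          = (|a q| * (2:ℝ) ^ (k₂ * q) * (|a p| * (2:ℝ) ^ (k₁ * p))) / (|a q| * |a p|) := by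
            field_simp
        _ ≤ (Γ * (|a p| * (2:ℝ) ^ (k₂ * p)) * (Γ * (|a q| * (2:ℝ) ^ (k₁ * q)))) / (|a q| * |a p|) := by
            gcongr
        _ = Γ ^ 2 * ((2:ℝ) ^ (k₂ * p) * (2:ℝ) ^ (k₁ * q)) := by
            field_simp
    have key3 : (2:ℝ) ^ ((k₂ - k₁) * ((q:ℤ) - p)) ≤ (2:ℝ) ^ ((2 * N : ℕ) : ℤ) := by
      have e1 : (k₂ - k₁) * ((q:ℤ) - p) = (k₂ * q + k₁ * p) - (k₂ * p + k₁ * q) := by ring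
      have e2 : Γ ^ 2 = (2:ℝ) ^ ((2 * N : ℕ) : ℤ) := by
        rw [zpow_natCast, hΓ, ← pow_mul]
        ring_nf
      rw [e1, zpow_sub₀ (two_ne_zero), div_le_iff₀ (zpow_pos two_pos _), ← e2]
      linarith [key2]
    have key4 : (k₂ - k₁) * ((q:ℤ) - p) ≤ 2 * (N : ℤ) := by
      have := (zpow_le_zpow_iff_right₀ (by norm_num : (1:ℝ) < 2)).mp key3
      omega
    have hqp : (1 : ℤ) ≤ (q:ℤ) - p := by
      have : p < q := hpq
      omega
    rcases le_or_gt (k₂ - k₁) 0 with h | h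
    · have : (0:ℤ) ≤ 2 * (N:ℤ) := by positivity
      linarith
    · have := le_mul_of_one_le_right h.le hqp
      linarith
  -- each J p q is covered by a finset of card ≤ 4 * 2^N
  have hJfin : ∀ p q : ℕ, ∃ F : Finset ℤ,
      (1 ≤ p → p < q → q ≤ d → J p q ⊆ ↑F) ∧ F.card ≤ 4 * 2 ^ N := by
    intro p q
    by_cases hh : 1 ≤ p ∧ p < q ∧ q ≤ d
    · obtain ⟨hp, hpq, hq⟩ := hh
      by_cases hne' : (J p q).Nonempty
      · obtain ⟨k₀, hk₀⟩ := hne'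
        refine ⟨Finset.Icc (k₀ - 2 * N) (k₀ + 2 * N), fun _ _ _ k hk => ?_, ?_⟩
        · have h1 := hdiam p q hp hpq hq k₀ k hk₀ hk
          have h2 := hdiam p q hp hpq hq k k₀ hk hk₀
          simp only [Finset.coe_Icc, Set.mem_Icc]
          omega
        · have hc : (Finset.Icc (k₀ - 2 * (N:ℤ)) (k₀ + 2 * N)).card = 4 * N + 1 := by
            rw [Int.card_Icc]
            omega
          rw [hc]
          have h2N : N < 2 ^ N := Nat.lt_two_pow_self
          omega
      · exact ⟨∅, fun _ _ _ k hk => absurd ⟨k, hk⟩ hne', by simp⟩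
    · refine ⟨∅, fun h1 h2 h3 => absurd ⟨h1, h2, h3⟩ hh, by simp⟩
  choose F hFsub hFcard using hJfin
  -- the global covering finset
  set T : Finset (ℕ × ℕ) := Finset.Icc 1 d ×ˢ Finset.Icc 1 d with hT
  set F₀ : Finset ℤ := T.biUnion (fun pq => F pq.1 pq.2) with hF₀
  -- coverage of the bad set
  have hsub : {k : ℤ | ¬ ∃ r, 1 ≤ r ∧ r ≤ d ∧ ∀ r', 1 ≤ r' → r' ≤ d → r' ≠ r →
      Γ * |a r' * (2 : ℝ) ^ (k * r')| < |a r * (2 : ℝ) ^ (k * r)|} ⊆ ↑F₀ := by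
    intro k hk
    simp only [Set.mem_setOf_eq] at hk
    push_neg at hk
    obtain ⟨rs, hrs, hmax⟩ := Finset.exists_max_image (Finset.Icc 1 d)
      (fun r => |a r * (2 : ℝ) ^ (k * r)|) ⟨1, by simp [Nat.one_le_iff_ne_zero]; omega⟩
    simp only [Finset.mem_Icc] at hrs
    obtain ⟨r', hr'1, hr'd, hr'ne, hr'le⟩ := hk rs hrs.1 hrs.2
    have hr'max : |a r' * (2 : ℝ) ^ (k * r')| ≤ |a rs * (2 : ℝ) ^ (k * rs)| :=
      hmax r' (Finset.mem_Icc.mpr ⟨hr'1, hr'd⟩)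
    have hsmall : ∀ (x y : ℝ), 0 ≤ y → x ≤ y → x ≤ Γ * y := fun x y hy hxy =>
      hxy.trans (le_mul_of_one_le_left hy hΓ1)
    -- k lies in J (min) (max)
    rcases lt_or_gt_of_ne hr'ne with hlt | hgt
    · -- r' < rs : pair (r', rs)
      have hkJ : k ∈ J r' rs :=
        ⟨hr'le, hsmall _ _ (abs_nonneg _) hr'max⟩
      have := hFsub r' rs hr'1 hlt hrs.2 hkJ
      refine Finset.mem_coe.mpr (Finset.mem_biUnion.mpr ⟨(r', rs), ?_, this⟩)
      simp [hT, Finset.mem_Icc, hr'1, hr'd, hrs.1, hrs.2]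
    · -- rs < r' : pair (rs, r')
      have hkJ : k ∈ J rs r' :=
        ⟨hsmall _ _ (abs_nonneg _) hr'max, hr'le⟩
      have := hFsub rs r' hrs.1 hgt hr'd hkJ
      refine Finset.mem_coe.mpr (Finset.mem_biUnion.mpr ⟨(rs, r'), ?_, this⟩)
      simp [hT, Finset.mem_Icc, hr'1, hr'd, hrs.1, hrs.2]
  -- cardinality of the covering finset
  have hcard : F₀.card ≤ 4 * d ^ 2 * 2 ^ N := by
    calc F₀.card ≤ ∑ pq ∈ T, (F pq.1 pq.2).card := Finset.card_biUnion_le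
      _ ≤ T.card • (4 * 2 ^ N) :=
          Finset.sum_le_card_nsmul _ _ _ (fun pq _ => hFcard pq.1 pq.2)
      _ ≤ (d * d) * (4 * 2 ^ N) := by
          simp only [smul_eq_mul, hT, Finset.card_product, Nat.card_Icc]
          have : d + 1 - 1 = d := by omega
          rw [this]
      _ = 4 * d ^ 2 * 2 ^ N := by ring
  constructor
  · exact Set.Finite.subset F₀.finite_toSet hsub
  · calc _ ≤ (↑F₀ : Set ℤ).ncard := Set.ncard_le_ncard hsub F₀.finite_toSet
      _ = F₀.card := Set.ncard_coe_finset F₀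
      _ ≤ 4 * d ^ 2 * 2 ^ N := hcard
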